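/- arXiv:2410.21676 — 2 statements merged into one kernel-verified Lean document; each statement's English description precedes it below -/
import Mathlib

section
/- Define for r ≥ 1 (representing Dγ/B) and D ≥ 1 the function F(r) = max{ r^{(1-b)/a}, r^{-2} } + (1/D)·r^{1/a}, with exponents a > 1 and b > a. Then the minimizer r* of F over [1, D] satisfies r* ≍ D^{a/min(b, 2a+1)}, and F(r*) ≍ D^{-min(b-1, 2a)/min(b, 2a+1)}. -/
/-- For `F(r) = max(r^{(1-b)/a}, r^{-2}) + (1/D) r^{1/a}` with `b > a > 1` and `D ≥ 1`,
any minimizer `r*` of `F` over `[1, D]` satisfies `r* ≍ D^{a/min(b, 2a+1)}` and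
`F(r*) ≍ D^{-min(b-1, 2a)/min(b, 2a+1)}`, with constants depending only on `a, b`. -/
theorem minimizer_of_risk_proxy (a b : ℝ) (ha : 1 < a) (hab : a < b) :
    ∃ c₁ c₂ c₃ c₄ : ℝ, 0 < c₁ ∧ 0 < c₂ ∧ 0 < c₃ ∧ 0 < c₄ ∧
      ∀ (D : ℝ), 1 ≤ D →
        ∀ rstar ∈ Set.Icc (1 : ℝ) D,
          (∀ r ∈ Set.Icc (1 : ℝ) D,
              max (rstar ^ ((1 - b) / a)) (rstar ^ (-2 : ℝ)) + (1 / D) * rstar ^ (1 / a)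
                ≤ max (r ^ ((1 - b) / a)) (r ^ (-2 : ℝ)) + (1 / D) * r ^ (1 / a)) →
          (c₁ * D ^ (a / min b (2 * a + 1)) ≤ rstar ∧
            rstar ≤ c₂ * D ^ (a / min b (2 * a + 1))) ∧
          (c₃ * D ^ (-(min (b - 1) (2 * a)) / min b (2 * a + 1))
              ≤ max (rstar ^ ((1 - b) / a)) (rstar ^ (-2 : ℝ)) + (1 / D) * rstar ^ (1 / a) ∧
            max (rstar ^ ((1 - b) / a)) (rstar ^ (-2 : ℝ)) + (1 / D) * rstar ^ (1 / a)
              ≤ c₄ * D ^ (-(min (b - 1) (2 * a)) / min b (2 * a + 1))) := by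
  set M := min b (2 * a + 1) with hM
  have ha0 : (0 : ℝ) < a := by linarith
  have hM1 : 1 < M := lt_min (by linarith) (by linarith)
  have hMa : a < M := lt_min hab (by linarith)
  have hM0 : (0 : ℝ) < M := by linarith
  have hK : min (b - 1) (2 * a) = M - 1 := by
    rw [hM]
    rcases le_total b (2 * a + 1) with h | h
    · rw [min_eq_left h, min_eq_left (by linarith)]
    · rw [min_eq_right h, min_eq_right (by linarith)]; ring
  have hK0 : (0 : ℝ) < M - 1 := by linarith
  have hexp0 : -(M - 1) / a ≤ 0 := by
    rw [neg_div]; exact neg_nonpos.mpr (by positivity)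
  -- max term collapses
  have hmax : ∀ r : ℝ, 1 ≤ r →
      max (r ^ ((1 - b) / a)) (r ^ (-2 : ℝ)) = r ^ (-(M - 1) / a) := by
    intro r hr
    rcases le_total (b - 1) (2 * a) with h | h
    · have hKb : M - 1 = b - 1 := by rw [← hK, min_eq_left h]
      have hle : (-2 : ℝ) ≤ (1 - b) / a := by
        rw [le_div_iff₀ ha0]; nlinarith
      rw [max_eq_left (Real.rpow_le_rpow_of_exponent_le hr hle)]
      congr 1
      rw [hKb]; ring
    · have hKb : M - 1 = 2 * a := by rw [← hK, min_eq_right h]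
      have hle : (1 - b) / a ≤ (-2 : ℝ) := by
        rw [div_le_iff₀ ha0]; nlinarith
      rw [max_eq_right (Real.rpow_le_rpow_of_exponent_le hr hle)]
      congr 1
      rw [hKb]; field_simp
  refine ⟨(2 : ℝ) ^ (-(a / (M - 1))), (2 : ℝ) ^ a, 1, 2,
    Real.rpow_pos_of_pos two_pos _, Real.rpow_pos_of_pos two_pos _, one_pos, two_pos,
    fun D hD rstar hrs hmin => ?_⟩
  obtain ⟨hr1, hrD⟩ := hrs
  have hD0 : (0 : ℝ) < D := by linarith
  have hr0 : (0 : ℝ) < rstar := by linarith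
  set r0 : ℝ := D ^ (a / M) with hr0def
  have h1r0 : 1 ≤ r0 := Real.one_le_rpow hD (by positivity)
  have hr0D : r0 ≤ D := by
    calc r0 ≤ D ^ (1 : ℝ) :=
          Real.rpow_le_rpow_of_exponent_le hD (by rw [div_le_one hM0]; linarith)
      _ = D := Real.rpow_one D
  -- key identities
  have e1 : r0 ^ (-(M - 1) / a) = D ^ (-(M - 1) / M) := by
    rw [hr0def, ← Real.rpow_mul hD0.le]
    congr 1
    field_simp
  have e1b : r0 ^ ((1 : ℝ) / a) = D ^ ((1 : ℝ) / M) := by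
    rw [hr0def, ← Real.rpow_mul hD0.le]
    congr 1
    field_simp
  have e2 : (1 / D) * r0 ^ ((1 : ℝ) / a) = D ^ (-(M - 1) / M) := by
    rw [e1b, one_div, ← Real.rpow_neg_one D, ← Real.rpow_add hD0]
    congr 1
    field_simp
    ring
  -- value of F at r0
  have hFr0 : max (r0 ^ ((1 - b) / a)) (r0 ^ (-2 : ℝ)) + (1 / D) * r0 ^ (1 / a)
      = 2 * D ^ (-(M - 1) / M) := by
    rw [hmax r0 h1r0, e1, e2]; ring
  have hmin' : rstar ^ (-(M - 1) / a) + (1 / D) * rstar ^ (1 / a)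
      ≤ 2 * D ^ (-(M - 1) / M) := by
    have := hmin r0 ⟨h1r0, hr0D⟩
    rwa [hFr0, hmax rstar hr1] at this
  have hterm1 : (0 : ℝ) ≤ rstar ^ (-(M - 1) / a) := (Real.rpow_pos_of_pos hr0 _).le
  have hterm2 : (0 : ℝ) ≤ (1 / D) * rstar ^ (1 / a) := by positivity
  -- lower bound on rstar
  have hlow : (2 : ℝ) ^ (-(a / (M - 1))) * D ^ (a / M) ≤ rstar := by
    have h1 : rstar ^ (-(M - 1) / a) ≤ 2 * D ^ (-(M - 1) / M) := by linarith
    have h2 := Real.rpow_le_rpow_of_nonpos (Real.rpow_pos_of_pos hr0 _) h1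
      (neg_nonpos.mpr (by positivity : (0:ℝ) ≤ a / (M - 1)))
    have e3 : (rstar ^ (-(M - 1) / a)) ^ (-(a / (M - 1))) = rstar := by
      rw [← Real.rpow_mul hr0.le,
        show (-(M - 1) / a) * (-(a / (M - 1))) = 1 by field_simp,
        Real.rpow_one]
    have e4 : (2 * D ^ (-(M - 1) / M)) ^ (-(a / (M - 1)))
        = 2 ^ (-(a / (M - 1))) * D ^ (a / M) := by
      rw [Real.mul_rpow (by norm_num) (Real.rpow_pos_of_pos hD0 _).le,
        ← Real.rpow_mul hD0.le]
      congr 1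
      rw [show (-(M - 1) / M) * (-(a / (M - 1))) = a / M by field_simp]
    rw [e3, e4] at h2
    exact h2
  -- upper bound on rstar
  have hhigh : rstar ≤ (2 : ℝ) ^ a * D ^ (a / M) := by
    have h1 : (1 / D) * rstar ^ ((1:ℝ) / a) ≤ 2 * D ^ (-(M - 1) / M) := by linarith
    have h1' : rstar ^ ((1:ℝ) / a) ≤ 2 * D ^ ((1:ℝ) / M) := by
      calc rstar ^ ((1:ℝ) / a) = D * ((1 / D) * rstar ^ ((1:ℝ) / a)) := by
            field_simp
        _ ≤ D * (2 * D ^ (-(M - 1) / M)) := mul_le_mul_of_nonneg_left h1 hD0.le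
        _ = 2 * (D ^ (1:ℝ) * D ^ (-(M - 1) / M)) := by rw [Real.rpow_one]; ring
        _ = 2 * D ^ ((1:ℝ) / M) := by
            rw [← Real.rpow_add hD0,
              show (1:ℝ) + -(M - 1) / M = 1 / M by field_simp; ring]
    have h3 := Real.rpow_le_rpow (Real.rpow_nonneg hr0.le _) h1' ha0.le
    rw [← Real.rpow_mul hr0.le, one_div, inv_mul_cancel₀ ha0.ne', Real.rpow_one,
      Real.mul_rpow (by norm_num) (Real.rpow_nonneg hD0.le _),
      ← Real.rpow_mul hD0.le,
      show (1:ℝ) / M * a = a / M by ring] at h3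
    exact h3
  -- lower bound on F
  have hFlow : D ^ (-(M - 1) / M)
      ≤ rstar ^ (-(M - 1) / a) + (1 / D) * rstar ^ (1 / a) := by
    rcases le_total rstar r0 with h | h
    · have h2 : r0 ^ (-(M - 1) / a) ≤ rstar ^ (-(M - 1) / a) :=
        Real.rpow_le_rpow_of_nonpos hr0 h hexp0
      rw [e1] at h2
      linarith
    · have h2 : r0 ^ ((1:ℝ) / a) ≤ rstar ^ ((1:ℝ) / a) :=
        Real.rpow_le_rpow (by positivity) h (by positivity)
      have h3 : (1 / D) * r0 ^ ((1:ℝ) / a) ≤ (1 / D) * rstar ^ ((1:ℝ) / a) :=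
        mul_le_mul_of_nonneg_left h2 (by positivity)
      rw [e2] at h3
      linarith
  rw [hK]
  refine ⟨⟨hlow, hhigh⟩, ?_, ?_⟩
  · rw [hmax rstar hr1, one_mul]
    exact hFlow
  · rw [hmax rstar hr1]
    exact hmin'
end

section
/- Suppose the excess risk of mini-batch SGD with data size D, batch size B ∈ [1, D], and learning rate γ ∈ (0, c] depends on (γ, B) only through the ratio ρ = γ/B and is given (up to constants) by R(ρ, D) = max{(Dρ)^{(1-b)/a}, (Dρ)^{-2}} + (1/D)(Dρ)^{1/a} for b > a > 1. Then among all (γ, B) achieving the optimal risk rate min_ρ R(ρ, D) up to constant factors, the number of sequential steps n = D/B is minimized by choosing γ ≍ 1 and B ≍ D^{1 - a/min(b, 2a+1)}, giving n ≍ D^{a/min(b, 2a+1)}. -/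
noncomputable def sgdRisk (a b D ρ : ℝ) : ℝ :=
  max ((D * ρ) ^ ((1 - b) / a)) ((D * ρ) ^ (-2 : ℝ)) + (1 / D) * (D * ρ) ^ (1 / a)

lemma sgd_max_ge {a b x : ℝ} (ha : 0 < a) :
    x ^ ((1 - min b (2*a+1)) / a) ≤ max (x ^ ((1 - b)/a)) (x ^ (-2:ℝ)) := by
  rcases min_cases b (2*a+1) with ⟨h, _⟩ | ⟨h, _⟩
  · rw [h]; exact le_max_left _ _
  · rw [h, show (1 - (2*a+1))/a = -2 by field_simp; ring]
    exact le_max_right _ _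

lemma sgd_risk_lower {a b D ρ : ℝ} (ha : 1 < a) (hab : a < b) (hD : 1 ≤ D) (hρ : 0 < ρ) :
    D ^ ((1 - min b (2*a+1)) / min b (2*a+1)) ≤ sgdRisk a b D ρ := by
  have ha0 : (0:ℝ) < a := by linarith
  set m := min b (2*a+1) with hm
  have ham : a < m := lt_min hab (by linarith)
  have hm0 : (0:ℝ) < m := by linarith
  have hD0 : (0:ℝ) < D := by linarith
  have hx0 : 0 < D * ρ := mul_pos hD0 hρ
  have h1 : (D*ρ) ^ ((1-m)/a) ≤ sgdRisk a b D ρ :=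
    le_add_of_le_of_nonneg (sgd_max_ge ha0) (by positivity)
  have h2 : (1/D) * (D*ρ) ^ (1/a) ≤ sgdRisk a b D ρ :=
    le_add_of_nonneg_left ((Real.rpow_pos_of_pos hx0 _).le.trans (le_max_left _ _))
  rcases le_total (D*ρ) (D ^ (a/m)) with hx | hx
  · refine le_trans ?_ h1
    have key : (D ^ (a/m)) ^ ((1-m)/a) ≤ (D*ρ) ^ ((1-m)/a) :=
      Real.rpow_le_rpow_of_nonpos hx0 hx
        (by rw [div_nonpos_iff]; right; constructor <;> linarith)
    refine le_trans (le_of_eq ?_) key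
    rw [← Real.rpow_mul hD0.le]
    congr 1
    field_simp
  · refine le_trans ?_ h2
    have key : (1/D) * (D ^ (a/m)) ^ (1/a) ≤ (1/D) * (D*ρ) ^ (1/a) := by
      have := Real.rpow_le_rpow (Real.rpow_pos_of_pos hD0 _).le hx (by positivity : (0:ℝ) ≤ 1/a)
      have hD1 : (0:ℝ) ≤ 1/D := by positivity
      exact mul_le_mul_of_nonneg_left this hD1
    refine le_trans (le_of_eq ?_) key
    rw [← Real.rpow_mul hD0.le, one_div D, ← Real.rpow_neg_one D, ← Real.rpow_add hD0]
    congr 1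
    field_simp
    ring

lemma sgd_risk_upper {a b D ρ : ℝ} (ha : 1 < a) (hab : a < b) (hx : 1 ≤ D * ρ) :
    sgdRisk a b D ρ ≤ (D*ρ) ^ ((1 - min b (2*a+1)) / a) + (1/D) * (D*ρ) ^ (1/a) := by
  have ha0 : (0:ℝ) < a := by linarith
  unfold sgdRisk
  refine add_le_add (max_le ?_ ?_) le_rfl
  · refine Real.rpow_le_rpow_of_exponent_le hx ?_
    rw [div_le_div_iff₀ ha0 ha0]
    nlinarith [min_le_left b (2*a+1)]
  · refine Real.rpow_le_rpow_of_exponent_le hx ?_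
    rw [le_div_iff₀ ha0]
    nlinarith [min_le_right b (2*a+1)]

set_option maxHeartbeats 1000000 in
/-- Critical batch size: if the excess risk depends on `(γ, B)` (with `γ ∈ (0, c]`,
`B ∈ [1, D]`) only through `ρ = γ/B` via `sgdRisk`, then among all `(γ, B)` achieving
the optimal risk rate up to a constant factor `K`, the number of sequential steps
`n = D/B` is minimized (up to constants) by `γ ≍ 1` and `B ≍ D^{1 - a/min(b, 2a+1)}`,
giving `n ≍ D^{a/min(b, 2a+1)}`. Constants depend only on `a, b, c`. -/
theorem critical_batch_size_scaling (a b c : ℝ) (ha : 1 < a) (hab : a < b) (hc : 0 < c) :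
    ∃ K k₁ k₂ k₃ : ℝ, 1 ≤ K ∧ 0 < k₁ ∧ 0 < k₂ ∧ 0 < k₃ ∧
      ∀ D : ℝ, 1 ≤ D →
        ∃ γstar Bstar : ℝ,
          0 < γstar ∧ γstar ≤ c ∧ k₁ ≤ γstar ∧
          1 ≤ Bstar ∧ Bstar ≤ D ∧
          k₁ * D ^ (1 - a / min b (2 * a + 1)) ≤ Bstar ∧
          Bstar ≤ k₂ * D ^ (1 - a / min b (2 * a + 1)) ∧
          sgdRisk a b D (γstar / Bstar)
            ≤ K * sInf (sgdRisk a b D '' Set.Ioc 0 c) ∧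
          (∀ γ B : ℝ, 0 < γ → γ ≤ c → 1 ≤ B → B ≤ D →
            sgdRisk a b D (γ / B) ≤ K * sInf (sgdRisk a b D '' Set.Ioc 0 c) →
            D / Bstar ≤ k₃ * (D / B)) ∧
          k₁ * D ^ (a / min b (2 * a + 1)) ≤ D / Bstar ∧
          D / Bstar ≤ k₂ * D ^ (a / min b (2 * a + 1)) := by
  have ha0 : (0:ℝ) < a := by linarith
  set m := min b (2 * a + 1) with hm_def
  have ham : a < m := lt_min hab (by linarith)
  have hm1 : (1:ℝ) < m := by linarith
  have hm0 : (0:ℝ) < m := by linarith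
  have h1m : (1:ℝ) - m ≠ 0 := ne_of_lt (by linarith)
  set μ := min c 1 with hμ_def
  have hμ0 : 0 < μ := lt_min hc one_pos
  have hμ1 : μ ≤ 1 := min_le_right _ _
  have hμc : μ ≤ c := min_le_left _ _
  have hμinv : (1:ℝ) ≤ μ⁻¹ := one_le_inv_iff₀.mpr ⟨hμ0, hμ1⟩
  set e : ℝ := 1 - a / m with he_def
  have ham' : a / m < 1 := (div_lt_one hm0).mpr ham
  have ham0 : 0 < a / m := div_pos ha0 hm0
  have he0 : 0 < e := by rw [he_def]; linarith
  have he1 : e < 1 := by rw [he_def]; linarith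
  set D₀ : ℝ := μ ^ (-(1/e)) with hD₀_def
  have hD₀0 : 0 < D₀ := Real.rpow_pos_of_pos hμ0 _
  set C₀ : ℝ := μ ^ ((1 - b)/a) + μ ^ (-2:ℝ) + (μ * D₀) ^ (1/a) with hC₀_def
  have hC₀0 : 0 < C₀ := by
    have p1 : 0 < μ ^ ((1 - b)/a) := Real.rpow_pos_of_pos hμ0 _
    have p2 : 0 < μ ^ (-2:ℝ) := Real.rpow_pos_of_pos hμ0 _
    have p3 : 0 < (μ * D₀) ^ (1/a) := Real.rpow_pos_of_pos (mul_pos hμ0 hD₀0) _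
    rw [hC₀_def]; linarith
  set L₀ : ℝ := D₀ ^ ((1 - m)/m) with hL₀_def
  have hL₀0 : 0 < L₀ := Real.rpow_pos_of_pos hD₀0 _
  set K : ℝ := max 2 (C₀ / L₀) with hK_def
  have hK2 : (2:ℝ) ≤ K := le_max_left _ _
  have hK1 : (1:ℝ) ≤ K := by linarith
  have hK0 : (0:ℝ) < K := by linarith
  set p : ℝ := (1 - m)/a with hp_def
  have hp0 : p < 0 := div_neg_of_neg_of_pos (by linarith) ha0
  have hpinv : 1/p ≤ 0 := by
    rw [one_div]; exact (inv_nonpos).mpr hp0.le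
  set c₁ : ℝ := K ^ (2/p) with hc₁_def
  have hc₁0 : 0 < c₁ := Real.rpow_pos_of_pos hK0 _
  refine ⟨K, μ, μ⁻¹, c/(c₁ * μ), hK1, hμ0, inv_pos.mpr hμ0,
    div_pos hc (mul_pos hc₁0 hμ0), ?_⟩
  intro D hD
  have hD0 : (0:ℝ) < D := by linarith
  have hDe1 : (1:ℝ) ≤ D ^ e := by
    calc (1:ℝ) = D ^ (0:ℝ) := (Real.rpow_zero D).symm
    _ ≤ D ^ e := Real.rpow_le_rpow_of_exponent_le hD he0.le
  have hDam1 : (1:ℝ) ≤ D ^ (a/m) := by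
    calc (1:ℝ) = D ^ (0:ℝ) := (Real.rpow_zero D).symm
    _ ≤ D ^ (a/m) := Real.rpow_le_rpow_of_exponent_le hD ham0.le
  have hDam0 : 0 < D ^ (a/m) := Real.rpow_pos_of_pos hD0 _
  have hDe0 : 0 < D ^ e := Real.rpow_pos_of_pos hD0 _
  have hDD1 : D ^ (a/m) ≤ D := by
    calc D ^ (a/m) ≤ D ^ (1:ℝ) := Real.rpow_le_rpow_of_exponent_le hD ham'.le
    _ = D := Real.rpow_one D
  set Bs : ℝ := max 1 (μ * D ^ e) with hBs_def
  have hBs1 : (1:ℝ) ≤ Bs := le_max_left _ _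
  have hBs0 : (0:ℝ) < Bs := by linarith
  have hsplit : D ^ e * D ^ (a/m) = D := by
    rw [← Real.rpow_add hD0, show e + a/m = 1 by rw [he_def]; ring, Real.rpow_one]
  have hBsD : Bs ≤ D := by
    apply max_le hD
    calc μ * D ^ e ≤ 1 * D ^ e := mul_le_mul_of_nonneg_right hμ1 hDe0.le
    _ = D ^ e := one_mul _
    _ ≤ D ^ (1:ℝ) := Real.rpow_le_rpow_of_exponent_le hD he1.le
    _ = D := Real.rpow_one D
  have hBs_le : Bs ≤ μ⁻¹ * D ^ e := by
    apply max_le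
    · calc (1:ℝ) ≤ D ^ e := hDe1
      _ = 1 * D ^ e := (one_mul _).symm
      _ ≤ μ⁻¹ * D ^ e := mul_le_mul_of_nonneg_right hμinv hDe0.le
    · exact mul_le_mul_of_nonneg_right (hμ1.trans hμinv) hDe0.le
  set S := sgdRisk a b D '' Set.Ioc 0 c with hS_def
  set L : ℝ := D ^ ((1 - m)/m) with hL_def
  have hLpos : 0 < L := Real.rpow_pos_of_pos hD0 _
  have hLS : ∀ y ∈ S, L ≤ y := by
    rintro y ⟨ρ, hρ, rfl⟩
    exact sgd_risk_lower ha hab hD hρ.1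
  have hSne : S.Nonempty := ⟨sgdRisk a b D c, ⟨c, ⟨hc, le_rfl⟩, rfl⟩⟩
  have hLinf : L ≤ sInf S := le_csInf hSne hLS
  have hbdd : BddBelow S := ⟨L, hLS⟩
  have hρs0 : 0 < μ / Bs := div_pos hμ0 hBs0
  have hρsc : μ / Bs ≤ c := le_trans (div_le_self hμ0.le hBs1) hμc
  have hmem : sgdRisk a b D (μ / Bs) ∈ S := ⟨μ / Bs, ⟨hρs0, hρsc⟩, rfl⟩
  have hmain : sgdRisk a b D (μ / Bs) ≤ K * L ∧ μ * D ^ (a/m) ≤ D / Bs ∧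
      D / Bs ≤ μ⁻¹ * D ^ (a/m) := by
    rcases le_or_gt 1 (μ * D ^ e) with h | h
    · have hBs : Bs = μ * D ^ e := max_eq_right h
      have hxx : D * (μ / Bs) = D ^ (a/m) := by
        rw [hBs, div_mul_cancel_left₀ hμ0.ne', ← div_eq_mul_inv, div_eq_iff hDe0.ne']
        linear_combination -hsplit
      have h1x : 1 ≤ D * (μ/Bs) := by rw [hxx]; exact hDam1
      have hub := sgd_risk_upper ha hab h1x
      rw [hxx] at hub
      have e1 : (D ^ (a/m)) ^ ((1-m)/a) = L := by
        rw [hL_def, ← Real.rpow_mul hD0.le]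
        congr 1
        field_simp
      have e2 : (1/D) * (D ^ (a/m)) ^ (1/a) = L := by
        rw [hL_def, ← Real.rpow_mul hD0.le, one_div D, ← Real.rpow_neg_one D,
          ← Real.rpow_add hD0]
        congr 1
        field_simp
        ring
      rw [e1, e2] at hub
      have hDe2 : D / D ^ e = D ^ (a/m) := by
        rw [div_eq_iff hDe0.ne']
        linear_combination -hsplit
      have hDBs : D / Bs = μ⁻¹ * D ^ (a/m) := by
        rw [hBs, mul_comm μ (D ^ e), ← div_div, hDe2, div_eq_inv_mul]
      have hLK : L + L ≤ K * L := by
        calc L + L = 2 * L := by ring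
        _ ≤ K * L := mul_le_mul_of_nonneg_right hK2 hLpos.le
      refine ⟨hub.trans hLK, ?_, le_of_eq hDBs⟩
      rw [hDBs]
      exact mul_le_mul_of_nonneg_right (hμ1.trans hμinv) hDam0.le
    · have hBs : Bs = 1 := max_eq_left h.le
      have hDeμ : D ^ e ≤ 1/μ := by
        rw [le_div_iff₀ hμ0]
        calc D ^ e * μ = μ * D ^ e := mul_comm _ _
        _ ≤ 1 := h.le
      have hDD₀ : D ≤ D₀ := by
        calc D = (D ^ e) ^ (1/e) := by
              rw [← Real.rpow_mul hD0.le, show e * (1/e) = 1 by field_simp,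
                Real.rpow_one]
        _ ≤ (1/μ) ^ (1/e) := Real.rpow_le_rpow hDe0.le hDeμ (by positivity)
        _ = D₀ := by
              rw [hD₀_def, one_div, Real.inv_rpow hμ0.le, ← Real.rpow_neg hμ0.le]
      have hρ1 : μ / Bs = μ := by rw [hBs, div_one]
      have hxμ : μ ≤ D * μ := le_mul_of_one_le_left hμ0.le hD
      have hxD₀ : D * μ ≤ μ * D₀ := by
        calc D * μ = μ * D := mul_comm _ _
        _ ≤ μ * D₀ := mul_le_mul_of_nonneg_left hDD₀ hμ0.le
      have hr : sgdRisk a b D μ ≤ C₀ := by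
        unfold sgdRisk
        have t1 : (D*μ) ^ ((1 - b)/a) ≤ μ ^ ((1 - b)/a) :=
          Real.rpow_le_rpow_of_nonpos hμ0 hxμ
            (by rw [div_nonpos_iff]; right; constructor <;> linarith)
        have t2 : (D*μ) ^ (-2:ℝ) ≤ μ ^ (-2:ℝ) :=
          Real.rpow_le_rpow_of_nonpos hμ0 hxμ (by norm_num)
        have t3 : (1/D) * (D*μ) ^ (1/a) ≤ (μ * D₀) ^ (1/a) := by
          calc (1/D) * (D*μ) ^ (1/a) ≤ 1 * (D*μ) ^ (1/a) := by
                have hDinv : (1:ℝ)/D ≤ 1 := by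
                  rw [div_le_one hD0]; exact hD
                exact mul_le_mul_of_nonneg_right hDinv
                  (Real.rpow_pos_of_pos (mul_pos hD0 hμ0) _).le
          _ = (D*μ) ^ (1/a) := one_mul _
          _ ≤ (μ * D₀) ^ (1/a) :=
              Real.rpow_le_rpow (mul_pos hD0 hμ0).le hxD₀ (by positivity)
        have p1 : 0 < μ ^ ((1 - b)/a) := Real.rpow_pos_of_pos hμ0 _
        have p2 : 0 < μ ^ (-2:ℝ) := Real.rpow_pos_of_pos hμ0 _
        have tmax : max ((D*μ) ^ ((1 - b)/a)) ((D*μ) ^ (-2:ℝ))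
            ≤ μ ^ ((1 - b)/a) + μ ^ (-2:ℝ) := by
          apply max_le
          · linarith
          · linarith
        rw [hC₀_def]
        linarith
      have hLL₀ : L₀ ≤ L := by
        rw [hL_def, hL₀_def]
        exact Real.rpow_le_rpow_of_nonpos hD0 hDD₀
          (by rw [div_nonpos_iff]; right; constructor <;> linarith)
      have hCKL : C₀ ≤ K * L := by
        calc C₀ = (C₀ / L₀) * L₀ := by field_simp
        _ ≤ K * L₀ := mul_le_mul_of_nonneg_right (le_max_right _ _) hL₀0.le
        _ ≤ K * L := mul_le_mul_of_nonneg_left hLL₀ hK0.le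
      refine ⟨by rw [hρ1]; exact hr.trans hCKL, ?_, ?_⟩
      · rw [hBs, div_one]
        calc μ * D ^ (a/m) ≤ 1 * D ^ (a/m) := mul_le_mul_of_nonneg_right hμ1 hDam0.le
        _ = D ^ (a/m) := one_mul _
        _ ≤ D := hDD1
      · rw [hBs, div_one]
        calc D = D ^ e * D ^ (a/m) := hsplit.symm
        _ ≤ μ⁻¹ * D ^ (a/m) := by
            have : D ^ e ≤ μ⁻¹ := by rw [← one_div]; exact hDeμ
            exact mul_le_mul_of_nonneg_right this hDam0.le
  obtain ⟨hup, hnl, hnu⟩ := hmain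
  refine ⟨μ, Bs, hμ0, hμc, le_rfl, hBs1, hBsD, le_max_right _ _, hBs_le,
    hup.trans (mul_le_mul_of_nonneg_left hLinf hK0.le), ?_, hnl, hnu⟩
  intro γ B hγ hγc hB1 hBD hrisk
  have hB0 : (0:ℝ) < B := by linarith
  have hinf_le : sInf S ≤ K * L := (csInf_le hbdd hmem).trans hup
  have hx'0 : 0 < D * (γ/B) := mul_pos hD0 (div_pos hγ hB0)
  have hlow' : (D*(γ/B)) ^ p ≤ sgdRisk a b D (γ/B) :=
    le_add_of_le_of_nonneg (sgd_max_ge ha0) (by positivity)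
  have h1 : (D*(γ/B)) ^ p ≤ K ^ (2:ℝ) * L := by
    have hKK : K * (K * L) = K ^ (2:ℝ) * L := by
      rw [show (2:ℝ) = ((2:ℕ):ℝ) by norm_num, Real.rpow_natCast]
      ring
    calc (D*(γ/B)) ^ p ≤ sgdRisk a b D (γ/B) := hlow'
    _ ≤ K * sInf S := hrisk
    _ ≤ K * (K * L) := mul_le_mul_of_nonneg_left hinf_le hK0.le
    _ = K ^ (2:ℝ) * L := hKK
  have hx' : c₁ * D ^ (a/m) ≤ D * (γ/B) := by
    have h2 : (K ^ (2:ℝ) * L) ^ (1/p) ≤ ((D*(γ/B)) ^ p) ^ (1/p) :=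
      Real.rpow_le_rpow_of_nonpos (Real.rpow_pos_of_pos hx'0 _) h1 hpinv
    have h3 : ((D*(γ/B)) ^ p) ^ (1/p) = D * (γ/B) := by
      rw [← Real.rpow_mul hx'0.le, mul_one_div_cancel hp0.ne, Real.rpow_one]
    have h4 : (K ^ (2:ℝ) * L) ^ (1/p) = c₁ * D ^ (a/m) := by
      rw [hL_def, hc₁_def,
        Real.mul_rpow (Real.rpow_pos_of_pos hK0 _).le (Real.rpow_pos_of_pos hD0 _).le,
        ← Real.rpow_mul hK0.le, ← Real.rpow_mul hD0.le]
      congr 1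
      · congr 1
        rw [mul_one_div]
      · congr 1
        rw [hp_def]
        field_simp
    rw [h3, h4] at h2
    exact h2
  have hDe' : D / D ^ (a/m) = D ^ e := by
    rw [div_eq_iff hDam0.ne']
    linear_combination -hsplit
  have hBle : B ≤ (c/(c₁*μ)) * Bs := by
    have hstep : B * (c₁ * D ^ (a/m)) ≤ D * γ := by
      calc B * (c₁ * D ^ (a/m)) ≤ B * (D * (γ/B)) :=
            mul_le_mul_of_nonneg_left hx' hB0.le
      _ = D * γ := by field_simp
    have hBc : B * (c₁ * D ^ (a/m)) ≤ c * D := by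
      refine hstep.trans ?_
      calc D * γ ≤ D * c := mul_le_mul_of_nonneg_left hγc hD0.le
      _ = c * D := mul_comm _ _
    have hBsμ : μ * D ^ e ≤ Bs := le_max_right _ _
    calc B = (B * (c₁ * D ^ (a/m))) / (c₁ * D ^ (a/m)) := by
          rw [mul_div_assoc, div_self (mul_pos hc₁0 hDam0).ne', mul_one]
    _ ≤ (c * D) / (c₁ * D ^ (a/m)) :=
          (div_le_div_iff_of_pos_right (mul_pos hc₁0 hDam0)).mpr hBc
    _ = (c / c₁) * D ^ e := by
          rw [← hDe', div_mul_div_comm]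
    _ = (c/(c₁*μ)) * (μ * D ^ e) := by
          field_simp
    _ ≤ (c/(c₁*μ)) * Bs :=
          mul_le_mul_of_nonneg_left hBsμ
            (div_pos hc (mul_pos hc₁0 hμ0)).le
  have h5 := mul_le_mul_of_nonneg_left hBle hD0.le
  rw [← mul_div_assoc, div_le_div_iff₀ hBs0 hB0]
  calc D * B ≤ D * (c/(c₁*μ) * Bs) := h5
  _ = c/(c₁*μ) * D * Bs := by ring
end
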